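/- Combining the charge-difference and vacancy-difference identities: if the rigging of the shortened row in color a is set to the new vacancy number p̃_{η_a−1}^{(a)} (while before removal it equaled p_{η_a}^{(a)}), then the total statistic c(ν,J) = c(ν) + Σ|J| changes by exactly −1/2·γ under one application of δ; i.e. c(ν,J) − c(ν̃,J̃) = −γ/2. -/

import Mathlib

open Finset

/-- `tailSum f t = Σ_{i ≥ t} f i`. -/
def tailSum (f : ℕ →₀ ℕ) (t : ℕ) : ℕ :=
  (f.support.filter fun i => t ≤ i).sum fun i => f i

/-- The pairing `Σ_{j,j'} min(j,j') f_j g_{j'}`. -/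
def pairQ (f g : ℕ →₀ ℕ) : ℚ :=
  f.support.sum fun j => g.support.sum fun j' => (min j j' : ℚ) * f j * g j'

/-- Cartan-like matrix with boundary modification `C_{ll} = 1`. -/
def cartanA (l a b : ℕ) : ℤ :=
  (if a = b then (if a = l then 1 else 2) else 0)
    - (if a + 1 = b then 1 else 0) - (if b + 1 = a then 1 else 0)

/-- The type-`A` charge `c(ν)`. -/
noncomputable def chargeA (l : ℕ) (L m : ℕ → ℕ →₀ ℕ) : ℚ :=
  (1 / 2) * ((Icc 1 l).sum fun a => (Icc 1 l).sum fun b =>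
      (cartanA l a b : ℚ) * pairQ (m a) (m b))
    - (Icc 1 l).sum fun a => pairQ (L a) (m a)

/-- `QfunZ m i = Σ_j min(i,j)·m_j`. -/
def QfunZ (m : ℕ →₀ ℕ) (i : ℕ) : ℤ := m.support.sum fun j => (min i j : ℤ) * m j

/-- Vacancy number with boundary modification at `a = l`. -/
def vacancyA (l : ℕ) (L m : ℕ → ℕ →₀ ℕ) (a i : ℕ) : ℤ :=
  ((L a).support.sum fun j => ((L a) j : ℤ) * (min i j : ℤ))
    + QfunZ (m (a - 1)) i
    - (if a = l then 1 else 2) * QfunZ (m a) i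
    + (if a = l then 0 else QfunZ (m (a + 1)) i)

/-! ### Auxiliary machinery -/

/-- `ℚ`-cast of `QfunZ`. -/
def qcQ (f : ℕ →₀ ℕ) (j : ℕ) : ℚ := ((QfunZ f j : ℤ) : ℚ)

/-- `ℚ`-cast of `min`. -/
def mcQ (i j : ℕ) : ℚ := ((min i j : ℕ) : ℚ)

lemma mcQ_comm (i j : ℕ) : mcQ i j = mcQ j i := by rw [mcQ, mcQ, min_comm]

lemma QfunZ_eq_sum (f : ℕ →₀ ℕ) (i : ℕ) :
    QfunZ f i = f.sum fun j c => (min i j : ℤ) * c := rfl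

lemma QfunZ_add (f g : ℕ →₀ ℕ) (i : ℕ) :
    QfunZ (f + g) i = QfunZ f i + QfunZ g i := by
  simp only [QfunZ_eq_sum]
  rw [Finsupp.sum_add_index']
  · intro j; simp
  · intro j c1 c2; push_cast; ring

lemma QfunZ_single (j c i : ℕ) :
    QfunZ (Finsupp.single j c) i = (min i j : ℤ) * c := by
  rw [QfunZ_eq_sum, Finsupp.sum_single_index]; simp

lemma pairQ_eq_sum (f g : ℕ →₀ ℕ) :
    pairQ f g = f.sum fun j c => (c : ℚ) * ((QfunZ g j : ℤ) : ℚ) := by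
  rw [pairQ, Finsupp.sum]
  refine Finset.sum_congr rfl fun j _ => ?_
  rw [QfunZ]
  push_cast
  rw [Finset.mul_sum]
  exact Finset.sum_congr rfl fun j' _ => by ring

lemma pairQ_comm (f g : ℕ →₀ ℕ) : pairQ f g = pairQ g f := by
  rw [pairQ, pairQ, Finset.sum_comm]
  refine Finset.sum_congr rfl fun j' _ => Finset.sum_congr rfl fun j _ => ?_
  rw [min_comm]; ring

lemma pairQ_add_left (f g h : ℕ →₀ ℕ) :
    pairQ (f + g) h = pairQ f h + pairQ g h := by
  simp only [pairQ_eq_sum]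
  rw [Finsupp.sum_add_index']
  · intro j; simp
  · intro j c1 c2; push_cast; ring

lemma pairQ_single_left (j : ℕ) (g : ℕ →₀ ℕ) :
    pairQ (Finsupp.single j 1) g = ((QfunZ g j : ℤ) : ℚ) := by
  rw [pairQ_eq_sum, Finsupp.sum_single_index] <;> simp

lemma pairQ_add_right (f g h : ℕ →₀ ℕ) :
    pairQ f (g + h) = pairQ f g + pairQ f h := by
  rw [pairQ_comm, pairQ_add_left, pairQ_comm g, pairQ_comm h]

lemma Q_corr {f f' : ℕ →₀ ℕ} {u v : ℕ}
    (hf : f' + Finsupp.single u 1 = f + Finsupp.single v 1) (i : ℕ) :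
    QfunZ f' i = QfunZ f i + (min i v : ℤ) - (min i u : ℤ) := by
  have := congrArg (fun g => QfunZ g i) hf
  simp only [QfunZ_add, QfunZ_single] at this
  push_cast at this ⊢
  linarith

lemma Q_corr' {f f' : ℕ →₀ ℕ} {u v : ℕ}
    (hf : f' + Finsupp.single u 1 = f + Finsupp.single v 1) (i : ℕ) :
    qcQ f' i = qcQ f i + mcQ i v - mcQ i u := by
  unfold qcQ mcQ
  rw [Q_corr hf i]
  push_cast
  ring

lemma pair_corr {f f' g g' : ℕ →₀ ℕ} {u v s t : ℕ}
    (hf : f' + Finsupp.single u 1 = f + Finsupp.single v 1)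
    (hg : g' + Finsupp.single s 1 = g + Finsupp.single t 1) :
    pairQ f' g' = pairQ f g + (qcQ f t - qcQ f s) + (qcQ g v - qcQ g u)
      + (mcQ v t - mcQ v s - mcQ u t + mcQ u s) := by
  unfold qcQ mcQ
  have H : pairQ (f' + Finsupp.single u 1) (g' + Finsupp.single s 1)
      = pairQ (f + Finsupp.single v 1) (g + Finsupp.single t 1) := by rw [hf, hg]
  have pairQ_single_right : ∀ (x : ℕ →₀ ℕ) (j : ℕ),
      pairQ x (Finsupp.single j 1) = ((QfunZ x j : ℤ) : ℚ) := fun x j => by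
    rw [pairQ_comm, pairQ_single_left]
  simp only [pairQ_add_left, pairQ_add_right, pairQ_single_left,
    pairQ_single_right, QfunZ_single] at H
  rw [hf] at H
  simp only [QfunZ_add, QfunZ_single] at H
  have h2 : QfunZ g' u = QfunZ g u + (min u t : ℤ) - (min u s : ℤ) := Q_corr hg u
  rw [h2] at H
  push_cast at H ⊢
  rw [min_comm (s : ℚ) (v : ℚ), min_comm (t : ℚ) (v : ℚ)] at H
  linarith

lemma vacancyA_eq (l : ℕ) (L m : ℕ → ℕ →₀ ℕ) (a i : ℕ) :
    vacancyA l L m a i = QfunZ (L a) i + QfunZ (m (a - 1)) i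
      - (if a = l then 1 else 2) * QfunZ (m a) i
      + (if a = l then 0 else QfunZ (m (a + 1)) i) := by
  have h : ((L a).support.sum fun j => ((L a) j : ℤ) * (min i j : ℤ)) = QfunZ (L a) i :=
    Finset.sum_congr rfl fun j _ => mul_comm _ _
  rw [vacancyA, h]

lemma vacancyA_cast (l : ℕ) (L mm : ℕ → ℕ →₀ ℕ) (a j : ℕ) :
    ((vacancyA l L mm a j : ℤ) : ℚ)
      = qcQ (L a) j + qcQ (mm (a - 1)) j
        - (if a = l then (1 : ℚ) else 2) * qcQ (mm a) j
        + (if a = l then (0 : ℚ) else qcQ (mm (a + 1)) j) := by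
  rw [vacancyA_eq]
  unfold qcQ
  by_cases h : a = l <;> simp only [h, if_pos, if_neg, if_true, if_false] <;>
    push_cast <;> ring

lemma cartanA_symm (l a b : ℕ) : cartanA l a b = cartanA l b a := by
  unfold cartanA
  rcases eq_or_ne a b with rfl | hab
  · simp
  · rw [if_neg hab, if_neg (Ne.symm hab)]
    split_ifs <;> omega

lemma cartan_row_sum (k l a : ℕ) (hk : 1 ≤ k) (ha : a ∈ Icc k l) (q : ℕ → ℚ) :
    ((Icc k l).sum fun b => (cartanA l a b : ℚ) * q b)
      = (if a = l then 1 else 2) * q a - (if a = k then 0 else q (a - 1))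
        - (if a = l then 0 else q (a + 1)) := by
  simp only [mem_Icc] at ha
  have step : ∀ b, (cartanA l a b : ℚ) * q b
      = (if b = a then (if a = l then 1 else 2) * q b else 0)
        - (if b = a + 1 then q b else 0) - (if b = a - 1 then q b else 0) := by
    intro b
    unfold cartanA
    push_cast
    split_ifs <;> first | ring1 | (exfalso; omega)
  rw [Finset.sum_congr rfl fun b _ => step b]
  rw [Finset.sum_sub_distrib, Finset.sum_sub_distrib]
  rw [Finset.sum_ite_eq' (Icc k l) a (fun b => (if a = l then (1:ℚ) else 2) * q b),
    Finset.sum_ite_eq' (Icc k l) (a+1) q, Finset.sum_ite_eq' (Icc k l) (a-1) q]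
  have ha' : a ∈ Icc k l := by simp only [mem_Icc]; omega
  rw [if_pos ha']
  have e2 : (if a + 1 ∈ Icc k l then q (a+1) else 0) = (if a = l then 0 else q (a+1)) := by
    simp only [mem_Icc]; split_ifs <;> first | rfl | omega
  have e3 : (if a - 1 ∈ Icc k l then q (a-1) else 0) = (if a = k then 0 else q (a-1)) := by
    simp only [mem_Icc]; split_ifs <;> first | rfl | omega
  rw [e2, e3]; ring

/-- The correction to `pairQ (m a) (m b)` coming from box removal. -/
def corrF (m : ℕ → ℕ →₀ ℕ) (u v : ℕ → ℕ) (a b : ℕ) : ℚ :=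
  (qcQ (m a) (v b) - qcQ (m a) (u b)) + (qcQ (m b) (v a) - qcQ (m b) (u a))
    + (mcQ (v a) (v b) - mcQ (v a) (u b) - mcQ (u a) (v b) + mcQ (u a) (u b))

def sF (m : ℕ → ℕ →₀ ℕ) (u v : ℕ → ℕ) (a b : ℕ) : ℚ :=
  qcQ (m b) (v a) - qcQ (m b) (u a)

def mF (u v : ℕ → ℕ) (a b : ℕ) : ℚ :=
  mcQ (v a) (v b) - mcQ (v a) (u b) - mcQ (u a) (v b) + mcQ (u a) (u b)

def NF (u v : ℕ → ℕ) (a b : ℕ) : ℚ := mcQ (v a) (v b) - mcQ (v a) (u b)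

def N2F (u v : ℕ → ℕ) (a b : ℕ) : ℚ := mcQ (u a) (v b) - mcQ (u a) (u b)

/-- Correction to the vacancy numbers. -/
def DvF (l : ℕ) (u v : ℕ → ℕ) (a j : ℕ) : ℚ :=
  (mcQ j (v (a - 1)) - mcQ j (u (a - 1)))
    - (if a = l then (1 : ℚ) else 2) * (mcQ j (v a) - mcQ j (u a))
    + (if a = l then (0 : ℚ) else mcQ j (v (a + 1)) - mcQ j (u (a + 1)))

theorem stmt13 (k l : ℕ) (hk : 1 ≤ k) (hkl : k ≤ l)
    (L m : ℕ → ℕ →₀ ℕ) (hm0 : m 0 = 0)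
    (η : ℕ → ℕ)
    (hη1 : ∀ a, k ≤ a → a ≤ l → 1 ≤ η a)
    (hηmono : ∀ a, k ≤ a → a < l → η (a + 1) ≤ η a)
    (hrow : ∀ a, k ≤ a → a ≤ l → 1 ≤ (m a) (η a))
    (hstabm : m (l + 1) = m l) (hstabη : η (l + 1) = η l)
    (m' : ℕ → ℕ →₀ ℕ)
    (hm' : ∀ a, m' a = if k ≤ a ∧ a ≤ l
        then m a + Finsupp.single (η a - 1) 1 - Finsupp.single (η a) 1
        else m a)
    (γ : ℚ) (hγ : 0 < γ)
    (Jtot J'tot : ℚ)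
    (hJ : J'tot = Jtot - ((Icc k l).sum fun a => ((vacancyA l L m a (η a) : ℚ)))
        + (Icc k l).sum fun a => ((vacancyA l L m' a (η a - 1) : ℚ))) :
    (γ * chargeA l L m + γ * Jtot) - (γ * chargeA l L m' + γ * J'tot)
      = -γ / 2 := by
  classical
  -- the deformation data
  set u : ℕ → ℕ := fun a => if k ≤ a ∧ a ≤ l then η a else 0 with hu
  set v : ℕ → ℕ := fun a => if k ≤ a ∧ a ≤ l then η a - 1 else 0 with hv
  have hKI : Icc k l ⊆ Icc 1 l := Finset.Icc_subset_Icc hk le_rfl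
  have huvK : ∀ a ∈ Icc k l, u a = η a ∧ v a = η a - 1 := by
    intro a ha
    rw [mem_Icc] at ha
    constructor <;> simp [hu, hv, ha.1, ha.2]
  have huv0 : ∀ a, a ∉ Icc k l → u a = 0 ∧ v a = 0 := by
    intro a ha
    rw [mem_Icc] at ha
    constructor <;> simp [hu, hv, ha]
  have hmove : ∀ a, m' a + Finsupp.single (u a) 1 = m a + Finsupp.single (v a) 1 := by
    intro a
    by_cases h : k ≤ a ∧ a ≤ l
    · have hua : u a = η a := by simp [hu, h]
      have hva : v a = η a - 1 := by simp [hv, h]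
      rw [hua, hva, hm' a, if_pos h]
      have hle : Finsupp.single (η a) 1 ≤ m a + Finsupp.single (η a - 1) 1 := by
        rw [Finsupp.single_le_iff, Finsupp.add_apply]
        exact le_add_right (hrow a h.1 h.2)
      exact tsub_add_cancel_of_le hle
    · have hua : u a = 0 := by simp [hu, h]
      have hva : v a = 0 := by simp [hv, h]
      rw [hua, hva, hm' a, if_neg h]
  -- pair corrections
  have hpair : ∀ a b, pairQ (m' a) (m' b) = pairQ (m a) (m b) + corrF m u v a b := by
    intro a b
    rw [pair_corr (hmove a) (hmove b), corrF]
    ring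
  have hLpair : ∀ a, pairQ (L a) (m' a)
      = pairQ (L a) (m a) + (qcQ (L a) (v a) - qcQ (L a) (u a)) := by
    intro a
    rw [pair_corr (rfl : L a + Finsupp.single 0 1 = L a + Finsupp.single 0 1) (hmove a)]
    ring
  -- charge correction
  have hcharge : chargeA l L m' = chargeA l L m
      + (1 / 2) * ((Icc 1 l).sum fun a => (Icc 1 l).sum fun b =>
          (cartanA l a b : ℚ) * corrF m u v a b)
      - (Icc 1 l).sum fun a => (qcQ (L a) (v a) - qcQ (L a) (u a)) := by
    unfold chargeA
    rw [show ((Icc 1 l).sum fun a => (Icc 1 l).sum fun b =>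
          (cartanA l a b : ℚ) * pairQ (m' a) (m' b))
        = ((Icc 1 l).sum fun a => (Icc 1 l).sum fun b =>
          ((cartanA l a b : ℚ) * pairQ (m a) (m b)
            + (cartanA l a b : ℚ) * corrF m u v a b)) from
      Finset.sum_congr rfl fun a _ => Finset.sum_congr rfl fun b _ => by
        rw [hpair a b]; ring]
    rw [show ((Icc 1 l).sum fun a => pairQ (L a) (m' a))
        = ((Icc 1 l).sum fun a =>
            (pairQ (L a) (m a) + (qcQ (L a) (v a) - qcQ (L a) (u a)))) from
      Finset.sum_congr rfl fun a _ => hLpair a]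
    simp only [Finset.sum_add_distrib]
    ring
  -- Cartan rows acting on Q-values give vacancy numbers
  have hrowI : ∀ a ∈ Icc 1 l, ∀ j : ℕ,
      ((Icc 1 l).sum fun b => (cartanA l a b : ℚ) * qcQ (m b) j)
        = qcQ (L a) j - ((vacancyA l L m a j : ℤ) : ℚ) := by
    intro a ha j
    have hz : qcQ (m 0) j = 0 := by simp [qcQ, hm0, QfunZ]
    rw [cartan_row_sum 1 l a le_rfl ha (fun b => qcQ (m b) j)]
    have e : (if a = 1 then (0 : ℚ) else qcQ (m (a - 1)) j) = qcQ (m (a - 1)) j := by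
      split_ifs with h
      · rw [h]; norm_num; exact hz.symm
      · rfl
    rw [e, vacancyA_cast]
    ring
  -- double sum of s-terms
  have hSS : ((Icc 1 l).sum fun a => (Icc 1 l).sum fun b =>
        (cartanA l a b : ℚ) * sF m u v a b)
      = (Icc 1 l).sum fun a =>
          ((qcQ (L a) (v a) - ((vacancyA l L m a (v a) : ℤ) : ℚ))
            - (qcQ (L a) (u a) - ((vacancyA l L m a (u a) : ℤ) : ℚ))) := by
    refine Finset.sum_congr rfl fun a ha => ?_
    calc ((Icc 1 l).sum fun b => (cartanA l a b : ℚ) * sF m u v a b)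
        = (Icc 1 l).sum fun b => ((cartanA l a b : ℚ) * qcQ (m b) (v a)
            - (cartanA l a b : ℚ) * qcQ (m b) (u a)) :=
          Finset.sum_congr rfl fun b _ => by rw [sF]; ring
      _ = ((Icc 1 l).sum fun b => (cartanA l a b : ℚ) * qcQ (m b) (v a))
            - (Icc 1 l).sum fun b => (cartanA l a b : ℚ) * qcQ (m b) (u a) :=
          Finset.sum_sub_distrib _ _
      _ = _ := by rw [hrowI a ha (v a), hrowI a ha (u a)]
  -- splitting the corr double sum
  have hswap : ((Icc 1 l).sum fun a => (Icc 1 l).sum fun b =>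
        (cartanA l a b : ℚ) * sF m u v b a)
      = (Icc 1 l).sum fun a => (Icc 1 l).sum fun b =>
        (cartanA l a b : ℚ) * sF m u v a b := by
    rw [Finset.sum_comm]
    exact Finset.sum_congr rfl fun a _ => Finset.sum_congr rfl fun b _ => by
      rw [cartanA_symm]
  have hsplit : ((Icc 1 l).sum fun a => (Icc 1 l).sum fun b =>
        (cartanA l a b : ℚ) * corrF m u v a b)
      = 2 * ((Icc 1 l).sum fun a => (Icc 1 l).sum fun b =>
          (cartanA l a b : ℚ) * sF m u v a b)
        + (Icc 1 l).sum fun a => (Icc 1 l).sum fun b =>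
          (cartanA l a b : ℚ) * mF u v a b := by
    have e : ∀ a b, (cartanA l a b : ℚ) * corrF m u v a b
        = (cartanA l a b : ℚ) * sF m u v b a + (cartanA l a b : ℚ) * sF m u v a b
          + (cartanA l a b : ℚ) * mF u v a b := by
      intro a b; rw [corrF, sF, sF, mF]; ring
    rw [Finset.sum_congr rfl fun a _ => Finset.sum_congr rfl fun b _ => e a b]
    simp only [Finset.sum_add_distrib]
    rw [hswap]
    ring
  -- restriction of sums from Icc 1 l to Icc k l
  have hmF0 : ∀ a b : ℕ, a ∉ Icc k l ∨ b ∉ Icc k l → mF u v a b = 0 := by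
    rintro a b (h | h)
    · obtain ⟨h1, h2⟩ := huv0 a h
      rw [mF, h1, h2]; ring
    · obtain ⟨h1, h2⟩ := huv0 b h
      rw [mF, h1, h2]; ring
  have hrestrM : ((Icc 1 l).sum fun a => (Icc 1 l).sum fun b =>
        (cartanA l a b : ℚ) * mF u v a b)
      = (Icc k l).sum fun a => (Icc k l).sum fun b =>
        (cartanA l a b : ℚ) * mF u v a b := by
    rw [show ((Icc 1 l).sum fun a => (Icc 1 l).sum fun b =>
          (cartanA l a b : ℚ) * mF u v a b)
        = ((Icc 1 l).sum fun a => (Icc k l).sum fun b =>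
          (cartanA l a b : ℚ) * mF u v a b) from
      Finset.sum_congr rfl fun a _ => (Finset.sum_subset hKI fun b _ hb => by
        rw [hmF0 a b (Or.inr hb)]; ring).symm]
    refine (Finset.sum_subset hKI fun a _ ha => ?_).symm
    refine Finset.sum_eq_zero fun b _ => ?_
    rw [hmF0 a b (Or.inl ha)]; ring
  have hrestrS : ((Icc 1 l).sum fun a =>
        ((qcQ (L a) (v a) - ((vacancyA l L m a (v a) : ℤ) : ℚ))
          - (qcQ (L a) (u a) - ((vacancyA l L m a (u a) : ℤ) : ℚ))))
      = (Icc k l).sum fun a =>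
        ((qcQ (L a) (v a) - ((vacancyA l L m a (v a) : ℤ) : ℚ))
          - (qcQ (L a) (u a) - ((vacancyA l L m a (u a) : ℤ) : ℚ))) := by
    refine (Finset.sum_subset hKI fun a _ ha => ?_).symm
    obtain ⟨h1, h2⟩ := huv0 a ha
    rw [h1, h2]; ring
  have hrestrL : ((Icc 1 l).sum fun a => (qcQ (L a) (v a) - qcQ (L a) (u a)))
      = (Icc k l).sum fun a => (qcQ (L a) (v a) - qcQ (L a) (u a)) := by
    refine (Finset.sum_subset hKI fun a _ ha => ?_).symm
    obtain ⟨h1, h2⟩ := huv0 a ha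
    rw [h1, h2]; ring
  -- vacancy corrections
  have hQc : ∀ x j, qcQ (m' x) j = qcQ (m x) j + mcQ j (v x) - mcQ j (u x) :=
    fun x j => Q_corr' (hmove x) j
  have hvac' : ∀ a j, ((vacancyA l L m' a j : ℤ) : ℚ)
      = ((vacancyA l L m a j : ℤ) : ℚ) + DvF l u v a j := by
    intro a j
    rw [vacancyA_cast, vacancyA_cast, hQc (a - 1) j, hQc a j, hQc (a + 1) j, DvF]
    by_cases h : a = l <;> simp only [h, if_pos, if_neg, if_true, if_false] <;> ring
  -- row computation for the Dv-term
  have hdvrow : ∀ a ∈ Icc k l, DvF l u v a (v a)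
      = -((Icc k l).sum fun b => (cartanA l a b : ℚ) * NF u v a b) := by
    intro a ha
    rw [cartan_row_sum k l a hk ha (fun b => NF u v a b)]
    have hm1 : a = k → mcQ (v a) (v (a - 1)) - mcQ (v a) (u (a - 1)) = 0 := by
      intro h
      have h0 : a - 1 ∉ Icc k l := by rw [mem_Icc]; omega
      obtain ⟨h1, h2⟩ := huv0 _ h0
      rw [h1, h2]; ring
    rw [DvF]
    simp only [NF]
    split_ifs <;> first | ring1 | linarith [hm1 (by assumption)]
  -- final min identities
  have hNswap : ((Icc k l).sum fun a => (Icc k l).sum fun b =>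
        (cartanA l a b : ℚ) * N2F u v a b)
      = (Icc k l).sum fun a => (Icc k l).sum fun b =>
        (cartanA l a b : ℚ) * N2F u v b a := by
    rw [Finset.sum_comm]
    exact Finset.sum_congr rfl fun a _ => Finset.sum_congr rfl fun b _ => by
      rw [cartanA_symm]
  have hG : ∀ a ∈ Icc k l, ∀ b ∈ Icc k l, NF u v a b + N2F u v b a = -1 := by
    intro a ha b hb
    obtain ⟨hua, hva⟩ := huvK a ha
    obtain ⟨hub, hvb⟩ := huvK b hb
    rw [mem_Icc] at ha hb
    have h1 : 1 ≤ η a := hη1 a ha.1 ha.2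
    have h2 : 1 ≤ η b := hη1 b hb.1 hb.2
    rw [NF, N2F, hua, hva, hub, hvb]
    rw [mcQ_comm (η b) (η a - 1), mcQ_comm (η b) (η a)]
    have : min (η a - 1) (η b - 1) + 1 = min (η a) (η b) := by omega
    have hc : mcQ (η a - 1) (η b - 1) + 1 = mcQ (η a) (η b) := by
      rw [mcQ, mcQ, ← this]; push_cast; ring
    linarith [hc]
  have hCsum : ((Icc k l).sum fun a => (Icc k l).sum fun b => (cartanA l a b : ℚ)) = 1 := by
    have hrow1 : ∀ a ∈ Icc k l, ((Icc k l).sum fun b => (cartanA l a b : ℚ))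
        = if a = k then 1 else 0 := by
      intro a ha
      rw [show ((Icc k l).sum fun b => (cartanA l a b : ℚ))
          = (Icc k l).sum fun b => (cartanA l a b : ℚ) * (fun _ => (1:ℚ)) b from
        Finset.sum_congr rfl fun b _ => by ring]
      rw [cartan_row_sum k l a hk ha (fun _ => (1:ℚ))]
      rw [mem_Icc] at ha
      split_ifs <;> first | norm_num | (exfalso; omega)
    rw [Finset.sum_congr rfl hrow1]
    rw [Finset.sum_ite_eq' (Icc k l) k (fun _ => (1:ℚ))]
    rw [if_pos (by rw [mem_Icc]; omega)]
  have hfinalsum : ((Icc k l).sum fun a => (Icc k l).sum fun b =>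
        (cartanA l a b : ℚ) * NF u v a b)
      + ((Icc k l).sum fun a => (Icc k l).sum fun b =>
        (cartanA l a b : ℚ) * N2F u v a b) = -1 := by
    rw [hNswap, ← Finset.sum_add_distrib]
    rw [show ((Icc k l).sum fun a => (((Icc k l).sum fun b =>
          (cartanA l a b : ℚ) * NF u v a b)
        + ((Icc k l).sum fun b => (cartanA l a b : ℚ) * N2F u v b a)))
        = (Icc k l).sum fun a => (Icc k l).sum fun b => -(cartanA l a b : ℚ) from ?_]
    · rw [show ((Icc k l).sum fun a => (Icc k l).sum fun b => -(cartanA l a b : ℚ))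
          = -((Icc k l).sum fun a => (Icc k l).sum fun b => (cartanA l a b : ℚ)) from ?_]
      · rw [hCsum]
      · simp [Finset.sum_neg_distrib]
    · refine Finset.sum_congr rfl fun a ha => ?_
      rw [← Finset.sum_add_distrib]
      refine Finset.sum_congr rfl fun b hb => ?_
      rw [show (cartanA l a b : ℚ) * NF u v a b + (cartanA l a b : ℚ) * N2F u v b a
          = (cartanA l a b : ℚ) * (NF u v a b + N2F u v b a) from by ring, hG a ha b hb]
      ring
  -- split mF into NF and N2F at the level of the double sum
  have hmFsplit : ((Icc k l).sum fun a => (Icc k l).sum fun b =>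
        (cartanA l a b : ℚ) * mF u v a b)
      = ((Icc k l).sum fun a => (Icc k l).sum fun b =>
          (cartanA l a b : ℚ) * NF u v a b)
        - (Icc k l).sum fun a => (Icc k l).sum fun b =>
          (cartanA l a b : ℚ) * N2F u v a b := by
    rw [← Finset.sum_sub_distrib]
    refine Finset.sum_congr rfl fun a _ => ?_
    rw [← Finset.sum_sub_distrib]
    refine Finset.sum_congr rfl fun b _ => ?_
    rw [mF, NF, N2F]; ring
  -- the J-sums
  have hPu : ((Icc k l).sum fun a => ((vacancyA l L m a (η a) : ℚ)))
      = (Icc k l).sum fun a => ((vacancyA l L m a (u a) : ℤ) : ℚ) := by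
    refine Finset.sum_congr rfl fun a ha => ?_
    rw [(huvK a ha).1]
  have hPv : ((Icc k l).sum fun a => ((vacancyA l L m' a (η a - 1) : ℚ)))
      = ((Icc k l).sum fun a => ((vacancyA l L m a (v a) : ℤ) : ℚ))
        + (Icc k l).sum fun a => DvF l u v a (v a) := by
    rw [← Finset.sum_add_distrib]
    refine Finset.sum_congr rfl fun a ha => ?_
    rw [← (huvK a ha).2, hvac' a (v a)]
  have hDvsum : ((Icc k l).sum fun a => DvF l u v a (v a))
      = -((Icc k l).sum fun a => (Icc k l).sum fun b =>
          (cartanA l a b : ℚ) * NF u v a b) := by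
    rw [Finset.sum_congr rfl hdvrow]
    simp [Finset.sum_neg_distrib]
  -- sum-level rearrangement of the s-term
  have hScomb : ((Icc k l).sum fun a =>
        ((qcQ (L a) (v a) - ((vacancyA l L m a (v a) : ℤ) : ℚ))
          - (qcQ (L a) (u a) - ((vacancyA l L m a (u a) : ℤ) : ℚ))))
      = ((Icc k l).sum fun a => (qcQ (L a) (v a) - qcQ (L a) (u a)))
        - ((Icc k l).sum fun a => ((vacancyA l L m a (v a) : ℤ) : ℚ))
        + (Icc k l).sum fun a => ((vacancyA l L m a (u a) : ℤ) : ℚ) := by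
    rw [show ((Icc k l).sum fun a =>
          ((qcQ (L a) (v a) - ((vacancyA l L m a (v a) : ℤ) : ℚ))
            - (qcQ (L a) (u a) - ((vacancyA l L m a (u a) : ℤ) : ℚ))))
        = (Icc k l).sum fun a =>
          ((qcQ (L a) (v a) - qcQ (L a) (u a))
            + (((vacancyA l L m a (u a) : ℤ) : ℚ)
              - ((vacancyA l L m a (v a) : ℤ) : ℚ))) from
      Finset.sum_congr rfl fun a _ => by ring]
    simp only [Finset.sum_add_distrib, Finset.sum_sub_distrib]
    ring
  -- put everything together
  have key : chargeA l L m - chargeA l L m'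
      + ((Icc k l).sum fun a => ((vacancyA l L m a (η a) : ℚ)))
      - ((Icc k l).sum fun a => ((vacancyA l L m' a (η a - 1) : ℚ)))
      = -(1 / 2) := by
    rw [hcharge, hsplit, hSS, hrestrM, hrestrS, hrestrL, hmFsplit, hScomb,
      hPu, hPv, hDvsum]
    linarith [hfinalsum]
  rw [hJ]
  linear_combination γ * key
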